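/- Let G = (V,E) be an unweighted graph and π : V → {1,…,n} an injective vertex order. Define edge weights ℓ({u,v}) = 3^{max{π(u),π(v)}}. Then for all vertices v, u: there exists a simple v-u-path on which u has maximum rank (w.r.t. π) if and only if every shortest v-u-path in (G,ℓ) has u as its maximum-rank vertex, i.e., the canonical HCuHL respecting π equals the canonical HHL of the weighted graph (G,ℓ) respecting π. -/

import Mathlib

/-- The weight of a walk when the edge `{u,v}` has weight `3 ^ max (π u) (π v)`. -/
def powWalkWeight {V : Type*} {G : SimpleGraph V} (π : V → ℕ) {a b : V}
    (p : G.Walk a b) : ℕ :=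
  (p.darts.map fun d => (3 : ℕ) ^ max (π d.toProd.1) (π d.toProd.2)).sum

lemma weight_cons {V : Type*} {G : SimpleGraph V} (π : V → ℕ) {a c b : V}
    (h : G.Adj a c) (q : G.Walk c b) :
    powWalkWeight π (SimpleGraph.Walk.cons h q)
      = 3 ^ max (π a) (π c) + powWalkWeight π q := by
  simp [powWalkWeight]

lemma weight_plus {V : Type*} {G : SimpleGraph V} (π : V → ℕ) :
    ∀ {a b : V} (p : G.Walk a b),
    powWalkWeight π p + 3 ^ π a + 3 ^ π b ≤
      2 * ((p.support.map fun w => (3:ℕ) ^ π w).sum) := by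
  intro a b p
  induction p with
  | nil => simp [powWalkWeight]; omega
  | @cons a c b h q ih =>
    have hmax : (3:ℕ) ^ max (π a) (π c) ≤ 3 ^ π a + 3 ^ π c := by
      rcases le_total (π a) (π c) with h1 | h1
      · rw [max_eq_right h1]; exact Nat.le_add_left _ _
      · rw [max_eq_left h1]; exact Nat.le_add_right _ _
    rw [weight_cons, SimpleGraph.Walk.support_cons, List.map_cons, List.sum_cons]
    omega

lemma geom3 : ∀ r : ℕ, 2 * (∑ k ∈ Finset.range r, (3:ℕ)^k) + 1 = 3^r := by
  intro r
  induction r with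
  | zero => simp
  | succ n ih => rw [Finset.sum_range_succ, pow_succ]; omega

lemma weight_lt {V : Type*} {G : SimpleGraph V} (π : V → ℕ) (hπ : Function.Injective π)
    {a b : V} (p : G.Walk a b) (hp : p.IsPath) {r : ℕ}
    (hr : ∀ w ∈ p.support, π w ≤ r) :
    powWalkWeight π p < 3 ^ (r + 1) := by
  have h1 := weight_plus π p
  have nodup : (p.support.map π).Nodup := hp.support_nodup.map hπ
  have hsub : (p.support.map π).toFinset ⊆ Finset.range (r + 1) := by
    intro k hk
    simp only [List.mem_toFinset, List.mem_map] at hk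
    obtain ⟨w, hw, rfl⟩ := hk
    exact Finset.mem_range.mpr (Nat.lt_succ_of_le (hr w hw))
  have h2 : (p.support.map fun w => (3:ℕ) ^ π w).sum ≤ ∑ k ∈ Finset.range (r+1), (3:ℕ)^k := by
    have e1 : (p.support.map fun w => (3:ℕ) ^ π w).sum
        = ∑ k ∈ (p.support.map π).toFinset, (3:ℕ)^k := by
      rw [List.sum_toFinset _ nodup, List.map_map]
      rfl
    rw [e1]
    exact Finset.sum_le_sum_of_subset hsub
  have h2' : 2 * (p.support.map fun w => (3:ℕ) ^ π w).sum
      ≤ 2 * ∑ k ∈ Finset.range (r+1), (3:ℕ)^k := Nat.mul_le_mul_left _ h2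
  have h3 := geom3 (r + 1)
  have h4 : (1:ℕ) ≤ 3 ^ π a := Nat.one_le_pow _ _ (by norm_num)
  have h5 : (1:ℕ) ≤ 3 ^ π b := Nat.one_le_pow _ _ (by norm_num)
  omega

lemma le_weight {V : Type*} {G : SimpleGraph V} (π : V → ℕ) :
    ∀ {a b : V} (p : G.Walk a b) (w : V), w ∈ p.support → w ≠ b →
      3 ^ π w ≤ powWalkWeight π p := by
  intro a b p
  induction p with
  | nil => intro w hw hne; simp at hw; exact absurd hw hne
  | @cons a c b h q ih =>
    intro w hw hne
    simp only [SimpleGraph.Walk.support_cons, List.mem_cons] at hw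
    rcases hw with rfl | hw
    · calc (3:ℕ) ^ π w ≤ 3 ^ max (π w) (π c) :=
            Nat.pow_le_pow_right (by norm_num) (le_max_left _ _)
        _ ≤ 3 ^ max (π w) (π c) + powWalkWeight π q := Nat.le_add_right _ _
        _ = powWalkWeight π (SimpleGraph.Walk.cons h q) := (weight_cons π h q).symm
    · calc (3:ℕ) ^ π w ≤ powWalkWeight π q := ih w hw hne
        _ ≤ 3 ^ max (π a) (π c) + powWalkWeight π q := Nat.le_add_left _ _
        _ = powWalkWeight π (SimpleGraph.Walk.cons h q) := (weight_cons π h q).symm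

/-- With edge weights `ℓ({u,v}) = 3 ^ max (π u) (π v)`, the canonical
HCuHL respecting `π` equals the canonical HHL of the weighted graph: for all `v, u`,
there is a simple `v`-`u`-path on which `u` has maximum rank iff `v` and `u` are
connected and `u` has maximum rank on every shortest `v`-`u`-path. -/
theorem canonical_HCuHL_eq_canonical_HHL {V : Type*} [Fintype V] (G : SimpleGraph V)
    (π : V → ℕ) (hπ : Function.Injective π) :
    ∀ v u : V,
      (∃ p : G.Walk v u, p.IsPath ∧ ∀ w ∈ p.support, π w ≤ π u) ↔
      ((∃ p : G.Walk v u, p.IsPath) ∧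
        ∀ p : G.Walk v u, p.IsPath →
          (∀ q : G.Walk v u, q.IsPath → powWalkWeight π p ≤ powWalkWeight π q) →
          ∀ w ∈ p.support, π w ≤ π u) := by
  intro v u
  constructor
  · rintro ⟨p, hp, hmax⟩
    refine ⟨⟨p, hp⟩, ?_⟩
    intro q hq hqmin w hw
    by_contra hlt
    push_neg at hlt
    have h1 : powWalkWeight π q ≤ powWalkWeight π p := hqmin p hp
    have h2 := weight_lt π hπ p hp hmax
    have hne : w ≠ u := fun e => by subst e; omega
    have h3 := le_weight π q w hw hne
    have h4 : (3:ℕ) ^ (π u + 1) ≤ 3 ^ π w := Nat.pow_le_pow_right (by norm_num) hlt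
    omega
  · rintro ⟨⟨p0, hp0⟩, hall⟩
    have hne : ({n | ∃ q : G.Walk v u, q.IsPath ∧ powWalkWeight π q = n} : Set ℕ).Nonempty :=
      ⟨_, p0, hp0, rfl⟩
    obtain ⟨n, ⟨q, hq, hqn⟩, hmin⟩ := Nat.lt_wfRel.wf.has_min _ hne
    refine ⟨q, hq, hall q hq ?_⟩
    intro q' hq'
    have h := hmin (powWalkWeight π q') ⟨q', hq', rfl⟩
    change ¬ powWalkWeight π q' < n at h
    omega
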